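/- For every limit ordinal λ, the map χ_λ : Int λ → 2 is a surjective homomorphism preserving binary joins, binary meets, 0, and 1, from the Boolean algebra Int λ onto the two-element bounded lattice 2. -/

import Mathlib

open Set

/-- Membership in the Boolean subalgebra of the powerset of `P` generated by the
lower subsets of `P`: the smallest family of subsets of `P` containing all lower
sets and closed under complementation and (binary) union (hence also under binary
intersection, and containing `∅` and `P`). -/
inductive IntMem (P : Type*) [Preorder P] : Set P → Prop
  | lower (s : Set P) : IsLowerSet s → IntMem P s
  | compl (s : Set P) : IntMem P s → IntMem P sᶜ
  | union (s t : Set P) : IntMem P s → IntMem P t → IntMem P (s ∪ t)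

/-- `Int P`: the Boolean subalgebra of the powerset of `P` generated by the lower subsets
of `P`, viewed as a set of subsets of `P`. -/
def IntP (P : Type*) [Preorder P] : Set (Set P) := {s | IntMem P s}

open Classical in
/-- `χ_o` : sends a subset of `{β | β < o}` to `false` if it is bounded (contained in some
`α < o`) and to `true` otherwise. -/
noncomputable def chiO (o : Ordinal) (x : Set ↥(Set.Iio o)) : Bool :=
  if ∃ α < o, ∀ β ∈ x, (β : Ordinal) < α then false else true

lemma chi_false_iff (o : Ordinal) (x : Set ↥(Set.Iio o)) :
    chiO o x = false ↔ ∃ α < o, ∀ β ∈ x, (β : Ordinal) < α := by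
  unfold chiO; split <;> simp_all

lemma chi_true_iff (o : Ordinal) (x : Set ↥(Set.Iio o)) :
    chiO o x = true ↔ ¬ ∃ α < o, ∀ β ∈ x, (β : Ordinal) < α := by
  unfold chiO; split <;> simp_all

/-- Every element of `Int λ` is bounded or co-bounded. -/
lemma intmem_bounded_or_cobounded (lam : Ordinal) (hlam : Order.IsSuccLimit lam)
    {x : Set ↥(Set.Iio lam)} (hx : IntMem ↥(Set.Iio lam) x) :
    (∃ α < lam, ∀ β ∈ x, (β : Ordinal) < α) ∨
    (∃ α < lam, ∀ β ∈ xᶜ, (β : Ordinal) < α) := by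
  induction hx with
  | lower s hs =>
    by_cases hb : ∃ α < lam, ∀ β ∈ s, (β : Ordinal) < α
    · exact Or.inl hb
    · right
      refine ⟨0, hlam.pos, fun β hβ => absurd ?_ hβ⟩
      push_neg at hb
      obtain ⟨γ, hγs, hγ⟩ := hb ((β : Ordinal) + 1) (hlam.succ_lt β.2)
      exact hs (show β ≤ γ from Subtype.coe_le_coe.mp (le_trans (le_of_lt
        (lt_add_one _)) hγ)) hγs
  | compl s hs ih =>
    rcases ih with h | h
    · exact Or.inr (by simpa using h)
    · exact Or.inl h
  | union s t hs ht ihs iht =>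
    rcases ihs with ⟨α, hα, h1⟩ | ⟨α, hα, h1⟩
    · rcases iht with ⟨γ, hγ, h2⟩ | ⟨γ, hγ, h2⟩
      · refine Or.inl ⟨max α γ, max_lt hα hγ, fun β hβ => ?_⟩
        rcases hβ with hβ | hβ
        · exact lt_of_lt_of_le (h1 β hβ) (le_max_left _ _)
        · exact lt_of_lt_of_le (h2 β hβ) (le_max_right _ _)
      · exact Or.inr ⟨γ, hγ, fun β hβ => h2 β fun h => hβ (Or.inr h)⟩
    · exact Or.inr ⟨α, hα, fun β hβ => h1 β fun h => hβ (Or.inl h)⟩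

/-- For every limit ordinal `λ`, the map `χ_λ : Int λ → 2` is a surjective
homomorphism preserving binary joins, binary meets, `0` and `1`, from the Boolean algebra
`Int λ` onto the two-element bounded lattice `2` (here realized as `Bool`). -/
theorem chi_is_surjective_bounded_lattice_hom (lam : Ordinal) (hlam : Order.IsSuccLimit lam) :
    chiO lam (∅ : Set ↥(Set.Iio lam)) = false ∧
    chiO lam (univ : Set ↥(Set.Iio lam)) = true ∧
    (∀ x ∈ IntP ↥(Set.Iio lam), ∀ y ∈ IntP ↥(Set.Iio lam),
      chiO lam (x ∪ y) = chiO lam x ⊔ chiO lam y) ∧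
    (∀ x ∈ IntP ↥(Set.Iio lam), ∀ y ∈ IntP ↥(Set.Iio lam),
      chiO lam (x ∩ y) = chiO lam x ⊓ chiO lam y) ∧
    (∀ c : Bool, ∃ x ∈ IntP ↥(Set.Iio lam), chiO lam x = c) := by
  have hempty : chiO lam (∅ : Set ↥(Set.Iio lam)) = false := by
    rw [chi_false_iff]
    exact ⟨0, hlam.pos, by simp⟩
  have huniv : chiO lam (univ : Set ↥(Set.Iio lam)) = true := by
    rw [chi_true_iff]
    rintro ⟨α, hα, h⟩
    exact absurd (h ⟨α, hα⟩ trivial) (lt_irrefl α)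
  refine ⟨hempty, huniv, fun x _ y _ => ?_, fun x hx y hy => ?_, fun c => ?_⟩
  · -- union
    by_cases hbx : ∃ α < lam, ∀ β ∈ x, (β : Ordinal) < α
    · by_cases hby : ∃ α < lam, ∀ β ∈ y, (β : Ordinal) < α
      · obtain ⟨α, hα, h1⟩ := hbx
        obtain ⟨γ, hγ, h2⟩ := hby
        have hu : chiO lam (x ∪ y) = false := by
          refine (chi_false_iff _ _).mpr ⟨max α γ, max_lt hα hγ, ?_⟩
          rintro β (hβ | hβ)
          · exact lt_of_lt_of_le (h1 β hβ) (le_max_left _ _)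
          · exact lt_of_lt_of_le (h2 β hβ) (le_max_right _ _)
        rw [hu, (chi_false_iff _ _).mpr ⟨α, hα, h1⟩,
          (chi_false_iff _ _).mpr ⟨γ, hγ, h2⟩]
        rfl
      · have hu : chiO lam (x ∪ y) = true := by
          refine (chi_true_iff _ _).mpr ?_
          rintro ⟨α, hα, h⟩
          exact hby ⟨α, hα, fun β hβ => h β (Or.inr hβ)⟩
        rw [hu, (chi_true_iff _ _).mpr hby]
        simp
    · have hu : chiO lam (x ∪ y) = true := by
        refine (chi_true_iff _ _).mpr ?_
        rintro ⟨α, hα, h⟩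
        exact hbx ⟨α, hα, fun β hβ => h β (Or.inl hβ)⟩
      rw [hu, (chi_true_iff _ _).mpr hbx]
      simp
  · -- intersection
    by_cases hbx : ∃ α < lam, ∀ β ∈ x, (β : Ordinal) < α
    · rw [(chi_false_iff _ _).mpr hbx]
      obtain ⟨α, hα, h1⟩ := hbx
      rw [(chi_false_iff _ _).mpr ⟨α, hα, fun β hβ => h1 β hβ.1⟩]
      rfl
    · by_cases hby : ∃ α < lam, ∀ β ∈ y, (β : Ordinal) < α
      · rw [(chi_false_iff _ _).mpr hby]
        obtain ⟨α, hα, h1⟩ := hby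
        rw [(chi_false_iff _ _).mpr ⟨α, hα, fun β hβ => h1 β hβ.2⟩]
        simp
      · rw [(chi_true_iff _ _).mpr hbx, (chi_true_iff _ _).mpr hby]
        show chiO lam (x ∩ y) = true
        rcases intmem_bounded_or_cobounded lam hlam hx with h | ⟨α, hα, hxc⟩
        · exact absurd h hbx
        rcases intmem_bounded_or_cobounded lam hlam hy with h | ⟨γ, hγ, hyc⟩
        · exact absurd h hby
        rw [chi_true_iff]
        rintro ⟨δ, hδ, h⟩
        set μ : Ordinal := max α (max γ δ) with hμ
        have hμlt : μ < lam := max_lt hα (max_lt hγ hδ)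
        have hxm : (⟨μ, hμlt⟩ : ↥(Set.Iio lam)) ∈ x := by
          by_contra hc
          exact absurd (hxc _ hc) (not_lt.mpr (le_max_left _ _))
        have hym : (⟨μ, hμlt⟩ : ↥(Set.Iio lam)) ∈ y := by
          by_contra hc
          exact absurd (hyc _ hc) (not_lt.mpr (le_trans (le_max_left _ _)
            (le_max_right _ _)))
        exact absurd (h _ ⟨hxm, hym⟩)
          (not_lt.mpr (le_trans (le_max_right _ _) (le_max_right _ _)))
  · -- surjectivity
    cases c with
    | false => exact ⟨∅, IntMem.lower ∅ (fun _ _ _ h => h), hempty⟩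
    | true => exact ⟨univ, IntMem.lower univ (fun _ _ _ _ => trivial), huniv⟩
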